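/- Let f be a subadditive non-decreasing function on nonnegative integers with f(0) = 0, and let g be the smallest concave function on {0, …, n−1} with g ≥ f. If g(k) > f(k) for some k, then there exist 0 ≤ a < k < b ≤ n−1 with g(k) = ((b−k)/(b−a))f(a) + ((k−a)/(b−a))f(b), and f(b) ≤ (b/k + 1)·f(k), whence g(k) ≤ 2f(k). -/

import Mathlib

/-- Value at `k` of the chord of `f` over `[p.1, p.2]`. -/
noncomputable def chordVal (f : ℕ → ℝ) (k : ℕ) (p : ℕ × ℕ) : ℝ :=
  (((p.2 : ℝ) - k) * f p.1 + ((k : ℝ) - p.1) * f p.2) / ((p.2 : ℝ) - p.1)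

/-- Pairs `(a, b)` with `a ≤ k ≤ b ≤ m` and `a < b`. -/
def chordSet (m k : ℕ) : Finset (ℕ × ℕ) :=
  (Finset.range (m + 1) ×ˢ Finset.range (m + 1)).filter
    (fun p => p.1 ≤ k ∧ k ≤ p.2 ∧ p.1 < p.2)

set_option maxHeartbeats 1000000 in
/-- If `g` is the smallest concave function above a subadditive non-decreasing `f` with
`f(0)=0` on `{0,…,n−1}`, and `g(k) > f(k)`, then `g(k)` equals a chord value
`((b−k)/(b−a))f(a) + ((k−a)/(b−a))f(b)` for some `a < k < b`, `f(b) ≤ (b/k + 1)f(k)`,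
and hence `g(k) ≤ 2f(k)`. -/
theorem stmt_8 (n : ℕ) (hn : 0 < n) (f g : ℕ → ℝ)
    (hf0 : f 0 = 0)
    (hmono : ∀ j k, j ≤ k → k ≤ n - 1 → f j ≤ f k)
    (hsub : ∀ j k, j + k ≤ n - 1 → f (j + k) ≤ f j + f k)
    (hgconc : ∀ a k b : ℕ, a ≤ k → k ≤ b → b ≤ n - 1 →
      ((b : ℝ) - a) * g k ≥ ((b : ℝ) - k) * g a + ((k : ℝ) - a) * g b)
    (hge : ∀ k, k ≤ n - 1 → f k ≤ g k)
    (hmin : ∀ h : ℕ → ℝ,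
      (∀ a k b : ℕ, a ≤ k → k ≤ b → b ≤ n - 1 →
        ((b : ℝ) - a) * h k ≥ ((b : ℝ) - k) * h a + ((k : ℝ) - a) * h b) →
      (∀ k, k ≤ n - 1 → f k ≤ h k) → ∀ k, k ≤ n - 1 → g k ≤ h k) :
    ∀ k, k ≤ n - 1 → f k < g k →
      (∃ a b : ℕ, a < k ∧ k < b ∧ b ≤ n - 1 ∧
        g k = (((b : ℝ) - k) / ((b : ℝ) - a)) * f a + (((k : ℝ) - a) / ((b : ℝ) - a)) * f b ∧
        f b ≤ ((b : ℝ) / k + 1) * f k) ∧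
      g k ≤ 2 * f k := by
  intro k hk hlt
  set m := n - 1 with hm
  -- degenerate case m = 0
  rcases Nat.eq_zero_or_pos m with hm0 | hm1
  · exfalso
    have hk0 : k = 0 := by omega
    have hgle : g k ≤ f k := by
      refine hmin f ?_ (fun j _ => le_refl _) k hk
      intro a k' b ha hb hbm
      have : a = 0 ∧ k' = 0 ∧ b = 0 := by omega
      obtain ⟨rfl, rfl, rfl⟩ := this
      simp
    linarith
  -- main case
  have hmemS : ∀ p : ℕ × ℕ, p ∈ chordSet m k ↔ p.1 ≤ k ∧ k ≤ p.2 ∧ p.2 ≤ m ∧ p.1 < p.2 := by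
    intro p
    simp only [chordSet, Finset.mem_filter, Finset.mem_product, Finset.mem_range, Nat.lt_succ_iff]
    constructor
    · rintro ⟨⟨h1, h2⟩, h3, h4, h5⟩; exact ⟨h3, h4, h2, h5⟩
    · rintro ⟨h1, h2, h3, h4⟩; exact ⟨⟨by omega, h3⟩, h1, h2, h4⟩
  have hSne : (chordSet m k).Nonempty := ⟨(0, m), (hmemS _).2 ⟨Nat.zero_le _, hk, le_refl _, hm1⟩⟩
  obtain ⟨⟨a, b⟩, hpS, hpmax⟩ := (chordSet m k).exists_max_image (chordVal f k) hSne
  obtain ⟨ha_le, hk_le, hb_le, hab⟩ := (hmemS (a, b)).1 hpS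
  have hveq : ∀ x y : ℕ, chordVal f k (x, y) =
      (((y : ℝ) - k) * f x + ((k : ℝ) - x) * f y) / ((y : ℝ) - x) := fun _ _ => rfl
  have hbaR0 : (0:ℝ) < (b:ℝ) - a := by
    have : (a:ℝ) < b := by exact_mod_cast hab
    linarith
  have hMeq : chordVal f k (a, b) = (((b : ℝ) - k) * f a + ((k : ℝ) - a) * f b) / ((b : ℝ) - a) := rfl
  -- f k ≤ chordVal f k (a, b)
  have hfk0 : (0:ℝ) ≤ f k := by rw [← hf0]; exact hmono 0 k (Nat.zero_le _) hk
  have hfkM : f k ≤ chordVal f k (a, b) := by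
    rcases Nat.eq_zero_or_pos k with hk0 | hk1
    · have h0m : ((0 : ℕ), m) ∈ chordSet m k := (hmemS _).2 ⟨Nat.zero_le _, hk, le_refl _, hm1⟩
      have := hpmax _ h0m
      have hval : chordVal f k ((0 : ℕ), m) = f k := by
        subst hk0
        simp [chordVal, hf0]
      linarith [hval ▸ this]
    · have h0k : ((0 : ℕ), k) ∈ chordSet m k := (hmemS _).2 ⟨Nat.zero_le _, le_refl _, hk, hk1⟩
      have := hpmax _ h0k
      have hval : chordVal f k ((0 : ℕ), k) = f k := by
        have hkR : (0:ℝ) < (k:ℝ) := by exact_mod_cast hk1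
        simp only [chordVal]
        push_cast
        rw [div_eq_iff (by linarith)]
        ring
      linarith [hval ▸ this]
  -- every chord value is ≤ g k
  have hub : ∀ q ∈ chordSet m k, chordVal f k q ≤ g k := by
    intro q hq
    obtain ⟨hq1, hq2, hq3, hq4⟩ := (hmemS q).1 hq
    have hc := hgconc q.1 k q.2 hq1 hq2 hq3
    have hga : f q.1 ≤ g q.1 := hge q.1 (by omega)
    have hgb : f q.2 ≤ g q.2 := hge q.2 hq3
    have hba : (0:ℝ) < (q.2 : ℝ) - q.1 := by
      have : (q.1 : ℝ) < q.2 := by exact_mod_cast hq4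
      linarith
    have hc1 : (0:ℝ) ≤ (q.2 : ℝ) - k := by
      have : (k : ℝ) ≤ q.2 := by exact_mod_cast hq2
      linarith
    have hc2 : (0:ℝ) ≤ (k : ℝ) - q.1 := by
      have : (q.1 : ℝ) ≤ k := by exact_mod_cast hq1
      linarith
    simp only [chordVal]
    rw [div_le_iff₀ hba]
    nlinarith [mul_le_mul_of_nonneg_left hga hc1, mul_le_mul_of_nonneg_left hgb hc2]
  have hMgk : chordVal f k (a, b) ≤ g k := hub (a, b) hpS
  -- g k ≤ chordVal f k (a, b) via a supporting affine line
  have hgkM : g k ≤ chordVal f k (a, b) := by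
    rcases lt_or_eq_of_le hk with hkm | hkm
    · -- k < m : slope from the right
      have hTne : (Finset.Ioc k m).Nonempty := ⟨m, Finset.mem_Ioc.2 ⟨hkm, le_refl _⟩⟩
      obtain ⟨j₀, hj₀T, hj₀max⟩ :=
        (Finset.Ioc k m).exists_max_image (fun j => (f j - chordVal f k (a, b)) / ((j : ℝ) - k)) hTne
      obtain ⟨hj₀k, hj₀m⟩ := Finset.mem_Ioc.1 hj₀T
      obtain ⟨d, hd⟩ : ∃ d : ℝ, d = (f j₀ - chordVal f k (a, b)) / ((j₀ : ℝ) - k) :=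
        ⟨_, rfl⟩
      have hj₀R : (0:ℝ) < (j₀ : ℝ) - k := by
        have : (k:ℝ) < j₀ := by exact_mod_cast hj₀k
        linarith
      have hdj₀ : d * ((j₀ : ℝ) - k) = f j₀ - chordVal f k (a, b) := by
        rw [hd]; exact div_mul_cancel₀ _ (by linarith)
      have hmaj : ∀ j, j ≤ m → f j ≤ chordVal f k (a, b) + d * ((j:ℝ) - k) := by
        intro j hj
        rcases lt_trichotomy j k with hjk | hjk | hjk
        · by_contra hcon
          push_neg at hcon
          have hjjS : (j, j₀) ∈ chordSet m k := (hmemS _).2 ⟨le_of_lt hjk, le_of_lt hj₀k, hj₀m, by omega⟩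
          have hle := hpmax _ hjjS
          have hjR : ((j:ℝ)) < k := by exact_mod_cast hjk
          have hjj₀ : (0:ℝ) < (j₀:ℝ) - j := by linarith
          rw [hveq j j₀, div_le_iff₀ hjj₀] at hle
          have hMle : chordVal f k (a, b) ≤ chordVal f k (a, b) := le_of_eq rfl
          nlinarith [hle, hcon, hdj₀]
        · subst hjk; simpa using hfkM
        · have hjT : j ∈ Finset.Ioc k m := Finset.mem_Ioc.2 ⟨hjk, hj⟩
          have hsl := hj₀max _ hjT
          have hjR : (0:ℝ) < (j:ℝ) - k := by
            have : (k:ℝ) < j := by exact_mod_cast hjk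
            linarith
          rw [div_le_div_iff₀ hjR hj₀R] at hsl
          nlinarith [hsl, hdj₀]
      have := hmin (fun j => chordVal f k (a, b) + d * ((j:ℝ) - k)) ?_ hmaj k hk
      · simpa using this
      · intro a' k' b' h1 h2 h3
        exact ge_of_eq (by ring)
    · -- k = m : slope from the left
      have hk1 : 0 < k := by omega
      have hTne : (Finset.range k).Nonempty := ⟨0, Finset.mem_range.2 hk1⟩
      obtain ⟨j₁, hj₁T, hj₁min⟩ :=
        (Finset.range k).exists_min_image (fun j => (chordVal f k (a, b) - f j) / ((k : ℝ) - j)) hTne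
      obtain ⟨d, hd⟩ : ∃ d : ℝ, d = (chordVal f k (a, b) - f j₁) / ((k : ℝ) - j₁) :=
        ⟨_, rfl⟩
      have hmaj : ∀ j, j ≤ m → f j ≤ chordVal f k (a, b) + d * ((j:ℝ) - k) := by
        intro j hj
        rcases lt_or_eq_of_le (show j ≤ k by omega) with hjk | hjk
        · have hjT : j ∈ Finset.range k := Finset.mem_range.2 hjk
          have hsl := hj₁min _ hjT
          have hjR : (0:ℝ) < (k:ℝ) - j := by
            have : (j:ℝ) < k := by exact_mod_cast hjk
            linarith
          rw [le_div_iff₀ hjR] at hsl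
          nlinarith [hsl]
        · subst hjk; simpa using hfkM
      have := hmin (fun j => chordVal f k (a, b) + d * ((j:ℝ) - k)) ?_ hmaj k hk
      · simpa using this
      · intro a' k' b' h1 h2 h3
        exact ge_of_eq (by ring)
  have hgk : g k = chordVal f k (a, b) := le_antisymm hgkM hMgk
  have hMfk : f k < chordVal f k (a, b) := hgk ▸ hlt
  -- the maximizing chord has a < k < b
  have hak : a < k := by
    by_contra hcon
    have hak' : a = k := by omega
    have hbk : (0:ℝ) < (b:ℝ) - k := by
      have : (k:ℝ) < b := by exact_mod_cast (by omega : k < b)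
      linarith
    have : chordVal f k (a, b) = f k := by
      rw [hMeq, hak']
      rw [div_eq_iff (by linarith)]
      ring
    linarith
  have hkb : k < b := by
    by_contra hcon
    have hbk' : b = k := by omega
    have hka : (0:ℝ) < (k:ℝ) - a := by
      have : (a:ℝ) < k := by exact_mod_cast hak
      linarith
    have : chordVal f k (a, b) = f k := by
      rw [hMeq, hbk']
      rw [div_eq_iff (by linarith)]
      ring
    linarith
  -- real cast facts
  have haR : (a:ℝ) < k := by exact_mod_cast hak
  have hbR : (k:ℝ) < b := by exact_mod_cast hkb
  have hbaR : (0:ℝ) < (b:ℝ) - a := by linarith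
  have hk1 : 0 < k := by omega
  have hkR : (0:ℝ) < (k:ℝ) := by exact_mod_cast hk1
  -- subadditive bound: f (k*q + r) ≤ q * f k + f r
  have key : ∀ q r : ℕ, k * q + r ≤ m → f (k * q + r) ≤ (q:ℝ) * f k + f r := by
    intro q
    induction q with
    | zero => intro r h; simp
    | succ q ih =>
      intro r h
      have h1 : k * q + r ≤ m := by
        have : k * (q + 1) = k * q + k := by ring
        omega
      have h2 : k + (k * q + r) ≤ m := by
        have : k * (q + 1) = k * q + k := by ring
        omega
      have h3 : k * (q + 1) + r = k + (k * q + r) := by ring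
      calc f (k * (q + 1) + r) = f (k + (k * q + r)) := by rw [h3]
        _ ≤ f k + f (k * q + r) := hsub k (k * q + r) h2
        _ ≤ f k + ((q:ℝ) * f k + f r) := by linarith [ih r h1]
        _ = ((q:ℕ) + 1 : ℝ) * f k + f r := by ring
        _ = (((q + 1 : ℕ)):ℝ) * f k + f r := by push_cast; ring
  -- f b ≤ (b/k + 1) * f k
  have hq := (Nat.div_add_mod b k).symm
  set q := b / k with hqdef
  set r := b % k with hrdef
  have hrk : r < k := Nat.mod_lt _ hk1
  have hfr : f r ≤ f k := hmono r k (le_of_lt hrk) hk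
  have hfb1 : f b ≤ (q:ℝ) * f k + f r := by
    have : k * q + r ≤ m := by omega
    have hb' : b = k * q + r := by omega
    rw [hb']
    exact key q r this
  have hqle : (q:ℝ) ≤ (b:ℝ) / k := by
    rw [le_div_iff₀ hkR]
    exact_mod_cast Nat.div_mul_le_self b k
  have hfb : f b ≤ ((b:ℝ) / k + 1) * f k := by
    have : (q:ℝ) * f k ≤ ((b:ℝ)/k) * f k := mul_le_mul_of_nonneg_right hqle hfk0
    nlinarith
  -- chord form of g k
  have hchord : g k = (((b : ℝ) - k) / ((b : ℝ) - a)) * f a + (((k : ℝ) - a) / ((b : ℝ) - a)) * f b := by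
    rw [hgk, hMeq]
    rw [div_mul_eq_mul_div, div_mul_eq_mul_div, ← add_div]
  refine ⟨⟨a, b, hak, hkb, hb_le, hchord, hfb⟩, ?_⟩
  -- g k ≤ 2 f k
  have hfa : f a ≤ f k := hmono a k (le_of_lt hak) hk
  have ht1 : (1:ℝ) ≤ (b:ℝ)/k := by
    rw [le_div_iff₀ hkR]
    have : (k:ℝ) ≤ b := le_of_lt hbR
    linarith
  have hkt : (k:ℝ) * ((b:ℝ)/k) = b := mul_div_cancel₀ _ (by linarith)
  have haR0 : (0:ℝ) ≤ a := Nat.cast_nonneg a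
  rw [hgk, hMeq, div_le_iff₀ hbaR]
  set t : ℝ := (b:ℝ)/k with htdef
  have h1 : ((b:ℝ) - k) * f a ≤ ((b:ℝ) - k) * f k :=
    mul_le_mul_of_nonneg_left hfa (by linarith)
  have h2 : ((k:ℝ) - a) * f b ≤ ((k:ℝ) - a) * ((t + 1) * f k) :=
    mul_le_mul_of_nonneg_left hfb (by linarith)
  have hat : (a:ℝ) * 1 ≤ (a:ℝ) * t := mul_le_mul_of_nonneg_left ht1 haR0
  have hcoef : ((b:ℝ) - k) + ((k:ℝ) - a) * (t + 1) ≤ 2 * ((b:ℝ) - a) := by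
    nlinarith [hkt, hat]
  nlinarith [h1, h2, mul_le_mul_of_nonneg_right hcoef hfk0]
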